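/- Let N be a positive integer and σ: {0,1}* -> {0,1,#}* be the N-uniform substitution σ(0) = # 0^{N-1}, σ(1) = # 1^{N-1}. Let w be an infinite binary word. If an abelian power u_0 u_1 ... u_{e-1} with exponent e ≥ N occurs as a factor of σ(w), then N divides |u_0|. -/

import Mathlib

/-- Abelian equivalence of words: each letter occurs equally often. -/
def AbEq {A : Type*} [DecidableEq A] (u v : List A) : Prop :=
  ∀ a : A, u.count a = v.count a

/-- `u` occurs as a (contiguous) factor of the infinite word `x`. -/
def OccursIn {A : Type*} (x : ℕ → A) (u : List A) : Prop :=
  ∃ i, u = (List.range u.length).map fun j => x (i + j)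

/-- An abelian power of exponent `e` and period `m` occurs in `x`. -/
def IsAbPow {A : Type*} [DecidableEq A] (x : ℕ → A) (e m : ℕ) : Prop :=
  0 < e ∧ 0 < m ∧ ∃ u : ℕ → List A,
    (∀ i < e, (u i).length = m) ∧
    (∀ i < e, AbEq (u i) (u 0)) ∧
    OccursIn x (((List.range e).map u).flatten)

/-- The `N`-uniform substitution `σ(0) = # 0^{N-1}`, `σ(1) = # 1^{N-1}`,
with `# = 2` in `Fin 3`. -/
def sigmaLetter (N : ℕ) (a : Fin 2) : List (Fin 3) :=
  (2 : Fin 3) :: List.replicate (N - 1) a.castSucc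

/-- `σ(w)`, applying `σ` letterwise to the infinite binary word `w`. -/
def sigmaWord (N : ℕ) (w : ℕ → Fin 2) (n : ℕ) : Fin 3 :=
  (sigmaLetter N (w (n / N))).getD (n % N) 0

private lemma ceil_step (N : ℕ) (hN : 0 < N) (b : ℕ) :
    (b + N) / N = (b + (N - 1)) / N + (if b % N = 0 then 1 else 0) := by
  obtain ⟨q, r, hr, rfl⟩ : ∃ q r, r < N ∧ b = N * q + r :=
    ⟨b / N, b % N, Nat.mod_lt _ hN, (Nat.div_add_mod b N).symm⟩
  have hmod : (N * q + r) % N = r := by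
    rw [Nat.mul_add_mod, Nat.mod_eq_of_lt hr]
  have hlhs : (N * q + r + N) / N = q + 1 := by
    rw [show N * q + r + N = N * (q + 1) + r by ring, Nat.mul_add_div hN,
      Nat.div_eq_of_lt hr]
  rcases Nat.eq_zero_or_pos r with h0 | h0
  · subst h0
    rw [hlhs, hmod, if_pos rfl,
      show N * q + 0 + (N - 1) = N * q + (N - 1) by ring, Nat.mul_add_div hN,
      Nat.div_eq_of_lt (by omega)]
  · rw [hlhs, hmod, if_neg (by omega),
      show N * q + r + (N - 1) = N * (q + 1) + (r - 1) by rw [Nat.mul_succ]; omega,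
      Nat.mul_add_div hN, Nat.div_eq_of_lt (by omega)]

private lemma count_range_div (N : ℕ) (hN : 0 < N) (a L : ℕ) :
    ((List.range L).countP fun j => decide ((a + j) % N = 0)) =
      (a + L + (N - 1)) / N - (a + (N - 1)) / N := by
  induction L with
  | zero => simp
  | succ L ih =>
    rw [List.range_succ, List.countP_append, ih]
    have hmono : (a + (N - 1)) / N ≤ (a + L + (N - 1)) / N :=
      Nat.div_le_div_right (by omega)
    have hstep := ceil_step N hN (a + L)
    have hL : a + (L + 1) + (N - 1) = a + L + N := by omega
    rw [hL]
    have hsing : (List.countP (fun j => decide ((a + j) % N = 0)) [L])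
        = if (a + L) % N = 0 then 1 else 0 := by
      simp [List.countP_cons]
    rw [hsing]
    by_cases hd : (a + L) % N = 0
    · rw [if_pos hd] at hstep ⊢
      omega
    · rw [if_neg hd] at hstep ⊢
      omega

private lemma sigmaWord_eq_two_iff (N : ℕ) (hN : 0 < N) (w : ℕ → Fin 2) (n : ℕ) :
    sigmaWord N w n = 2 ↔ n % N = 0 := by
  unfold sigmaWord sigmaLetter
  rcases Nat.eq_zero_or_pos (n % N) with h0 | h0
  · simp [h0]
  · have hlt : n % N < N := Nat.mod_lt _ hN
    obtain ⟨r, hr⟩ : ∃ r, n % N = r + 1 := ⟨n % N - 1, by omega⟩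
    rw [hr, List.getD_cons_succ]
    have hget : (List.replicate (N - 1) (w (n / N)).castSucc).getD r 0
        = (w (n / N)).castSucc := by
      rw [List.getD_eq_getElem?_getD, List.getElem?_replicate, if_pos (by omega)]
      rfl
    rw [hget]
    have hv := (w (n / N)).isLt
    constructor
    · intro hc
      have hval := congrArg Fin.val hc
      simp at hval
      omega
    · omega

/-- If an abelian power of exponent `e ≥ N` and period `m` occurs in `σ(w)`,
then `N` divides `m`. -/
theorem period_divisible_of_abelian_power_in_sigma
    (N : ℕ) (hN : 0 < N) (w : ℕ → Fin 2) (e m : ℕ)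
    (he : N ≤ e) (h : IsAbPow (sigmaWord N w) e m) :
    N ∣ m := by
  obtain ⟨he0, hm0, u, hlen, hab, i, hocc⟩ := h
  set x : ℕ → Fin 3 := sigmaWord N w with hx
  have hflatlen : ∀ k, k ≤ e → (((List.range k).map u).flatten).length = k * m := by
    intro k hk
    rw [List.length_flatten, List.map_map]
    have hrep : (List.range k).map (List.length ∘ u) = List.replicate k m := by
      apply List.eq_replicate_iff.mpr
      refine ⟨by simp, ?_⟩
      intro b hb
      simp only [List.mem_map, List.mem_range, Function.comp] at hb
      obtain ⟨j, hj, rfl⟩ := hb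
      exact hlen j (by omega)
    rw [hrep, List.sum_replicate, smul_eq_mul]
  rw [hflatlen e le_rfl] at hocc
  have hP : ∀ k, k ≤ e → ((List.range k).map u).flatten =
      (List.range (k * m)).map fun j => x (i + j) := by
    intro k hk
    have hsplit : List.range e = List.range k ++ (List.range (e - k)).map (k + ·) := by
      conv_lhs => rw [show e = k + (e - k) by omega]
      exact List.range_add
    have h1 : ((List.range e).map u).flatten
        = ((List.range k).map u).flatten
          ++ (((List.range (e - k)).map (k + ·)).map u).flatten := by
      rw [hsplit, List.map_append, List.flatten_append]
    have h2 : (((List.range e).map u).flatten).take (k * m)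
        = ((List.range k).map u).flatten := by
      rw [h1]; exact List.take_left' (hflatlen k hk)
    rw [hocc, ← List.map_take, List.take_range,
      Nat.min_eq_left (Nat.mul_le_mul_right m hk)] at h2
    exact h2.symm
  have hseg : ∀ k, k < e → u k = (List.range m).map fun j => x (i + (k * m + j)) := by
    intro k hk
    have h2 := hP (k + 1) hk
    have h3 : ((List.range (k + 1)).map u).flatten
        = ((List.range k).map u).flatten ++ u k := by
      rw [List.range_succ, List.map_append, List.flatten_append]; simp
    have h4 : u k = (((List.range (k + 1)).map u).flatten).drop (k * m) := by
      rw [h3]; exact (List.drop_left' (hflatlen k (le_of_lt hk))).symm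
    rw [h2] at h4
    have h5 : List.range ((k + 1) * m)
        = List.range (k * m) ++ (List.range m).map (k * m + ·) := by
      rw [show (k + 1) * m = k * m + m by ring]; exact List.range_add
    rw [h5, List.map_append, List.drop_left' (by simp)] at h4
    rw [h4, List.map_map]
    exact List.map_congr_left fun j _ => rfl
  have hcount : ∀ k, k < e → (u k).count 2 =
      (i + k * m + m + (N - 1)) / N - (i + k * m + (N - 1)) / N := by
    intro k hk
    rw [hseg k hk, List.count_eq_countP, List.countP_map]
    have hcongr : ((List.range m).countP
          ((fun y => y == (2 : Fin 3)) ∘ fun j => x (i + (k * m + j))))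
        = ((List.range m).countP fun j => decide ((i + k * m + j) % N = 0)) := by
      apply List.countP_congr
      intro j _
      simp only [Function.comp, beq_iff_eq, decide_eq_true_eq]
      rw [hx, sigmaWord_eq_two_iff N hN, add_assoc]
    rw [hcongr, count_range_div N hN]
  set c := (u 0).count 2 with hc
  have hG : ∀ k, k < e →
      (i + (k + 1) * m + (N - 1)) / N = (i + k * m + (N - 1)) / N + c := by
    intro k hk
    have h1 := hcount k hk
    rw [hab k hk 2] at h1
    have hmono : (i + k * m + (N - 1)) / N ≤ (i + k * m + m + (N - 1)) / N :=
      Nat.div_le_div_right (by omega)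
    rw [show i + (k + 1) * m + (N - 1) = i + k * m + m + (N - 1) by ring]
    omega
  have hiter : ∀ k, k ≤ N → (i + k * m + (N - 1)) / N = (i + (N - 1)) / N + k * c := by
    intro k
    induction k with
    | zero => simp
    | succ k ih =>
      intro hk
      rw [hG k (by omega), ih (by omega)]
      ring
  have hNm : (i + N * m + (N - 1)) / N = (i + (N - 1)) / N + m := by
    rw [show i + N * m + (N - 1) = N * m + (i + (N - 1)) by ring, Nat.mul_add_div hN]
    omega
  have hfin := hiter N le_rfl
  exact ⟨c, by omega⟩
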